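/- arXiv:1712.04889 — 2 statements merged into one kernel-verified Lean document; each statement's English description precedes it below -/
import Mathlib

section
/- For each N∈ℕ let λ₁^{(N)} ≥ ⋯ ≥ λ_N^{(N)} be real random variables on some probability space and let μ_N := N^{−1}Σ_{k=1}^N δ_{λ_k^{(N)}}, with Stieltjes transform m_{μ_N}(z) := N^{−1}Σ_k (λ_k^{(N)} − z)^{−1}. Let ν be a compactly supported probability measure on ℝ with Stieltjes transform m_ν(z) := ∫(x−z)^{−1}ν(dx). Assume: (i) there are deterministic numbers λ̂₁^{(N)} such that for every ε>0, P(|λ₁^{(N)} − λ̂₁^{(N)}| > N^{ε−1/2}) → 0 as N→∞; (ii) there is C>0 such that Im m_ν(x+iη) ≤ Cη/√(κ+η) for all x∈ℝ and η>0, where κ := dist(x, supp ν); (iii) there exist γ,δ,ε>0 and a sequence ε_N→0 such that |E[m_{μ_N}(z)] − m_ν(z)| ≤ ε_N N^{−1/2−γ} for all z=E+iη with dist(E, supp ν) ≥ N^{−ε} and η ≥ N^{−1/2−δ}. Then there exists ε'>0 such that P( dist(λ₁^{(N)}, supp ν) > N^{−ε'} ) → 0 as N→∞. -/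
open MeasureTheory Filter
open scoped ENNReal

set_option maxHeartbeats 1000000

/-- Topological support of a measure on `ℝ`. -/
def measSupport (ν : Measure ℝ) : Set ℝ := {x | ∀ U ∈ nhds x, 0 < ν U}

/-- Imaginary part of the resolvent of a real point. -/
lemma resolvent_im (lamv E η : ℝ) :
    (((lamv : ℂ) - ((E : ℂ) + (η : ℂ) * Complex.I))⁻¹).im
      = η / ((lamv - E) ^ 2 + η ^ 2) := by
  rw [Complex.inv_im]
  simp [Complex.normSq_apply]
  ring

/-- If the largest point `λ₁` concentrates around a deterministic location,
the limiting Stieltjes transform has square-root edge behaviour, and the averaged empirical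
Stieltjes transform converges at rate `o(N^{−1/2−γ})` outside the support, then `λ₁` lies
within `N^{−ε'}` of the support of `ν` with probability tending to one. -/
theorem eigenvalue_location_from_averaged_law
    (Ω : ℕ → Type) (mΩ : ∀ N, MeasurableSpace (Ω N)) (P : ∀ N, Measure (Ω N))
    (hP : ∀ N, IsProbabilityMeasure (P N))
    (lam : ∀ N, Fin N → Ω N → ℝ)
    (hmeas : ∀ N k, Measurable (lam N k))
    (hsort : ∀ N (ω : Ω N), Antitone fun k => lam N k ω)
    (ν : Measure ℝ) (hν : IsProbabilityMeasure ν)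
    (hcomp : IsCompact (measSupport ν))
    (hatlam : ℕ → ℝ)
    (hconc : ∀ ε : ℝ, 0 < ε →
      Tendsto (fun N : ℕ =>
          P (N + 1) {ω | (((N + 1 : ℕ) : ℝ)) ^ (ε - 1 / 2) <
            |lam (N + 1) 0 ω - hatlam (N + 1)|})
        atTop (nhds 0))
    (C : ℝ) (hC : 0 < C)
    (hsqrt : ∀ x η : ℝ, 0 < η →
      (∫ t : ℝ, ((t : ℂ) - (x + η * Complex.I))⁻¹ ∂ν).im ≤
        C * η / Real.sqrt (Metric.infDist x (measSupport ν) + η))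
    (γ δ ε : ℝ) (hγ : 0 < γ) (hδ : 0 < δ) (hε : 0 < ε)
    (εseq : ℕ → ℝ) (hεseq : Tendsto εseq atTop (nhds 0))
    (hloc : ∀ N : ℕ, 1 ≤ N → ∀ z : ℂ,
      (N : ℝ) ^ (-ε) ≤ Metric.infDist z.re (measSupport ν) →
      (N : ℝ) ^ (-(1 : ℝ) / 2 - δ) ≤ z.im →
      ‖(∫ ω, (N : ℂ)⁻¹ * ∑ k : Fin N, ((lam N k ω : ℂ) - z)⁻¹ ∂(P N)) -
          ∫ t : ℝ, ((t : ℂ) - z)⁻¹ ∂ν‖ ≤ εseq N * (N : ℝ) ^ (-(1 : ℝ) / 2 - γ)) :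
    ∃ ε' : ℝ, 0 < ε' ∧
      Tendsto (fun N : ℕ =>
          P (N + 1) {ω | (((N + 1 : ℕ) : ℝ)) ^ (-ε') <
            Metric.infDist (lam (N + 1) 0 ω) (measSupport ν)})
        atTop (nhds 0) := by
  classical
  -- Trivial case: empty support.
  by_cases hS : (measSupport ν) = ∅
  · refine ⟨1, one_pos, ?_⟩
    have hzero : ∀ N : ℕ, {ω | (((N + 1 : ℕ) : ℝ)) ^ (-(1:ℝ)) <
        Metric.infDist (lam (N + 1) 0 ω) (measSupport ν)} = (∅ : Set (Ω (N + 1))) := by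
      intro N
      ext ω
      simp only [Set.mem_setOf_eq, Set.mem_empty_iff_false, iff_false, not_lt, hS,
        Metric.infDist_empty]
      positivity
    simp only [hzero, measure_empty]
    exact tendsto_const_nhds
  -- Main case.
  set a : ℝ := min (min ε δ) (min γ 2⁻¹) with hadef
  have ha0 : 0 < a := by
    refine lt_min (lt_min hε hδ) (lt_min hγ (by norm_num))
  have haε : a ≤ ε := le_trans (min_le_left _ _) (min_le_left _ _)
  have haδ : a ≤ δ := le_trans (min_le_left _ _) (min_le_right _ _)
  have haγ : a ≤ γ := le_trans (min_le_right _ _) (min_le_left _ _)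
  have hah : a ≤ 2⁻¹ := le_trans (min_le_right _ _) (min_le_right _ _)
  refine ⟨a / 2, by positivity, ?_⟩
  -- natural-cast sequence tends to infinity
  have hnat : Tendsto (fun N : ℕ => ((N + 1 : ℕ) : ℝ)) atTop atTop :=
    tendsto_natCast_atTop_atTop.comp (tendsto_add_atTop_nat 1)
  -- Eventual numeric facts
  have hE1 : ∀ᶠ N : ℕ in atTop, (4 : ℝ) ≤ ((N + 1 : ℕ) : ℝ) ^ ((1:ℝ)/2 - 3*a/4) := by
    have h : (0:ℝ) < (1:ℝ)/2 - 3*a/4 := by nlinarith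
    exact ((tendsto_rpow_atTop h).comp hnat).eventually_ge_atTop 4
  have hE2 : ∀ᶠ N : ℕ in atTop, (2 : ℝ) ≤ ((N + 1 : ℕ) : ℝ) ^ (ε - a/2) := by
    have h : (0:ℝ) < ε - a/2 := by linarith
    exact ((tendsto_rpow_atTop h).comp hnat).eventually_ge_atTop 2
  have hE3 : ∀ᶠ N : ℕ in atTop,
      12*C*((N + 1 : ℕ) : ℝ) ^ (-(a/2)) + 6*|εseq (N + 1)| < 3/4 := by
    have h1 : Tendsto (fun N : ℕ => 12*C*((N + 1 : ℕ) : ℝ) ^ (-(a/2))) atTop (nhds 0) := by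
      have := (tendsto_rpow_neg_atTop (by positivity : (0:ℝ) < a/2)).comp hnat
      simpa using this.const_mul (12*C)
    have h2 : Tendsto (fun N : ℕ => 6*|εseq (N + 1)|) atTop (nhds 0) := by
      have := (hεseq.comp (tendsto_add_atTop_nat 1)).abs
      simpa using this.const_mul 6
    have := h1.add h2
    simp only [add_zero] at this
    exact this.eventually_lt_const (by norm_num)
  have hE4 : ∀ᶠ N : ℕ in atTop,
      P (N + 1) {ω | (((N + 1 : ℕ) : ℝ)) ^ (a/4 - 1 / 2) <
        |lam (N + 1) 0 ω - hatlam (N + 1)|} < (4⁻¹ : ℝ≥0∞) :=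
    (hconc (a/4) (by positivity)).eventually_lt_const (by norm_num)
  -- The key eventual inclusion
  have key : ∀ᶠ N : ℕ in atTop,
      {ω | (((N + 1 : ℕ) : ℝ)) ^ (-(a/2)) <
          Metric.infDist (lam (N + 1) 0 ω) (measSupport ν)} ⊆
      {ω | (((N + 1 : ℕ) : ℝ)) ^ (a/4 - 1 / 2) <
          |lam (N + 1) 0 ω - hatlam (N + 1)|} := by
    filter_upwards [hE1, hE2, hE3, hE4] with N h1 h2 h3 h4
    set n : ℕ := N + 1 with hndef
    have hn1 : 1 ≤ n := Nat.le_add_left 1 N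
    have hnR1 : (1:ℝ) ≤ (n : ℝ) := by exact_mod_cast hn1
    have hnR0 : (0:ℝ) < (n : ℝ) := lt_of_lt_of_le one_pos hnR1
    have hrp : ∀ x y : ℝ, (n:ℝ)^x * (n:ℝ)^y = (n:ℝ)^(x+y) :=
      fun x y => (Real.rpow_add hnR0 x y).symm
    set θ : ℝ := (n : ℝ) ^ (a/4 - 1/2) with hθdef
    set η : ℝ := (n : ℝ) ^ (-(1:ℝ)/2 - a) with hηdef
    have hθ0 : 0 < θ := Real.rpow_pos_of_pos hnR0 _
    have hη0 : 0 < η := Real.rpow_pos_of_pos hnR0 _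
    intro ω₀ hbad
    simp only [Set.mem_setOf_eq] at hbad ⊢
    by_contra hcl
    have hclose : |lam n 0 ω₀ - hatlam n| ≤ θ := not_lt.mp hcl
    -- 4θ ≤ n^{-a/2}
    have h4θ : 4*θ ≤ (n:ℝ)^(-(a/2)) := by
      have h5 : 4*θ ≤ (n:ℝ)^((1:ℝ)/2 - 3*a/4) * θ := by
        exact mul_le_mul_of_nonneg_right h1 hθ0.le
      refine h5.trans_eq ?_
      rw [hθdef, hrp]
      congr 1
      ring
    -- infDist of the deterministic location
    have hdist1 : (n:ℝ)^(-(a/2)) < Metric.infDist (hatlam n) (measSupport ν) + θ := by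
      calc (n:ℝ)^(-(a/2)) < Metric.infDist (lam n 0 ω₀) (measSupport ν) := hbad
        _ ≤ Metric.infDist (hatlam n) (measSupport ν) + dist (lam n 0 ω₀) (hatlam n) :=
            Metric.infDist_le_infDist_add_dist
        _ ≤ Metric.infDist (hatlam n) (measSupport ν) + θ := by
            rw [Real.dist_eq]; linarith [hclose]
    -- grid
    set M : ℕ := ⌊2*θ/η⌋₊ with hMdef
    have hMle : (M:ℝ) ≤ 2*θ/η := Nat.floor_le (by positivity)
    have hMη : (M:ℝ)*η ≤ 2*θ := by
      have := mul_le_mul_of_nonneg_right hMle hη0.le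
      rwa [div_mul_cancel₀ _ hη0.ne'] at this
    have hEdist : ∀ j : ℕ, j ≤ M →
        (n:ℝ)^(-(a/2))/2 ≤ Metric.infDist (hatlam n - θ + j*η) (measSupport ν) := by
      intro j hj
      have hjη0 : 0 ≤ (j:ℝ)*η := by positivity
      have hjη : (j:ℝ)*η ≤ 2*θ := by
        refine le_trans ?_ hMη
        have : (j:ℝ) ≤ (M:ℝ) := by exact_mod_cast hj
        exact mul_le_mul_of_nonneg_right this hη0.le
      have hEθ : dist (hatlam n) (hatlam n - θ + j*η) ≤ θ := by
        rw [Real.dist_eq, abs_le]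
        constructor <;> [linarith; linarith]
      have h6 : Metric.infDist (hatlam n) (measSupport ν) ≤
          Metric.infDist (hatlam n - θ + j*η) (measSupport ν) + θ :=
        le_trans Metric.infDist_le_infDist_add_dist (by linarith)
      linarith
    have hEε : ∀ j : ℕ, j ≤ M →
        (n:ℝ)^(-ε) ≤ Metric.infDist (hatlam n - θ + j*η) (measSupport ν) := by
      intro j hj
      refine le_trans ?_ (hEdist j hj)
      rw [le_div_iff₀ (by norm_num : (0:ℝ) < 2)]
      calc (n:ℝ)^(-ε) * 2 = 2 * (n:ℝ)^(-ε) := by ring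
        _ ≤ (n:ℝ)^(ε - a/2) * (n:ℝ)^(-ε) :=
            mul_le_mul_of_nonneg_right h2 (Real.rpow_nonneg hnR0.le _)
        _ = (n:ℝ)^(-(a/2)) := by rw [hrp]; congr 1; ring
    have hηδ : (n:ℝ)^(-(1:ℝ)/2 - δ) ≤ η := by
      rw [hηdef]
      exact Real.rpow_le_rpow_of_exponent_le hnR1 (by linarith)
    -- the imaginary part formula
    have hFim : ∀ (E' : ℝ) (ω : Ω n),
        (((n:ℕ):ℂ)⁻¹ * ∑ k : Fin n, ((lam n k ω : ℂ) - ((E' : ℂ) + (η : ℂ) * Complex.I))⁻¹).im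
          = ((n:ℕ):ℝ)⁻¹ * ∑ k : Fin n, η / ((lam n k ω - E') ^ 2 + η ^ 2) := by
      intro E' ω
      rw [show (((n:ℕ):ℂ))⁻¹ = Complex.ofReal (((n:ℕ):ℝ)⁻¹) by push_cast; ring]
      rw [Complex.im_ofReal_mul, Complex.im_sum]
      congr 1
      exact Finset.sum_congr rfl fun k _ => resolvent_im _ _ _
    -- per grid point bound
    set B : ℝ := 2*(n:ℝ)*η * (2*C*η*(n:ℝ)^(a/4) + |εseq n| * (n:ℝ)^(-(1:ℝ)/2 - γ)) with hBdef
    have hzbd : ∀ j : ℕ, j ≤ M →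
        (P n {ω | (2*(n:ℝ)*η)⁻¹ ≤
          (((n:ℕ):ℂ)⁻¹ * ∑ k : Fin n, ((lam n k ω : ℂ) -
            (((hatlam n - θ + j*η : ℝ) : ℂ) + (η : ℂ) * Complex.I))⁻¹).im}).toReal ≤ B := by
      intro j hj
      have := hP n
      set E' : ℝ := hatlam n - θ + j*η with hE'def
      set z : ℂ := ((E' : ℝ) : ℂ) + (η : ℂ) * Complex.I with hzdef
      have hzre : z.re = E' := by simp [hzdef]
      have hzim : z.im = η := by simp [hzdef]
      set F : Ω n → ℂ := fun ω => ((n:ℕ):ℂ)⁻¹ * ∑ k : Fin n, ((lam n k ω : ℂ) - z)⁻¹ with hFdef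
      -- measurability
      have hFm : Measurable F := by
        apply Measurable.const_mul
        exact Finset.measurable_sum _ fun k _ =>
          ((Complex.measurable_ofReal.comp (hmeas n k)).sub measurable_const).inv
      -- boundedness
      have hFb : ∀ ω, ‖F ω‖ ≤ η⁻¹ := by
        intro ω
        have hterm : ∀ k : Fin n, ‖((lam n k ω : ℂ) - z)⁻¹‖ ≤ η⁻¹ := by
          intro k
          rw [norm_inv]
          refine inv_anti₀ hη0 ?_
          calc η = |((lam n k ω : ℂ) - z).im| := by
                rw [Complex.sub_im, hzim]
                simp [abs_of_pos hη0]
            _ ≤ ‖(lam n k ω : ℂ) - z‖ := Complex.abs_im_le_norm _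
            _ = ‖(lam n k ω : ℂ) - z‖ := rfl
        have hsum : ‖∑ k : Fin n, ((lam n k ω : ℂ) - z)⁻¹‖ ≤ (n:ℝ) * η⁻¹ := by
          calc ‖∑ k : Fin n, ((lam n k ω : ℂ) - z)⁻¹‖
              ≤ ∑ k : Fin n, ‖((lam n k ω : ℂ) - z)⁻¹‖ := norm_sum_le _ _
            _ ≤ ∑ _k : Fin n, η⁻¹ := Finset.sum_le_sum fun k _ => hterm k
            _ = (n:ℝ) * η⁻¹ := by
                rw [Finset.sum_const, Finset.card_univ, Fintype.card_fin, nsmul_eq_mul]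
        calc ‖F ω‖ = ‖((n:ℕ):ℂ)⁻¹‖ * ‖∑ k : Fin n, ((lam n k ω : ℂ) - z)⁻¹‖ := norm_mul _ _
          _ ≤ ‖((n:ℕ):ℂ)⁻¹‖ * ((n:ℝ) * η⁻¹) := by
              refine mul_le_mul_of_nonneg_left hsum (norm_nonneg _)
          _ = η⁻¹ := by
              rw [norm_inv]
              rw [show ‖((n:ℕ):ℂ)‖ = (n:ℝ) by simp]
              field_simp
      -- integrability
      have hFi : Integrable F (P n) :=
        (integrable_const (η⁻¹)).mono' hFm.aestronglyMeasurable (Eventually.of_forall hFb)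
      have hGi : Integrable (fun ω => (F ω).im) (P n) := by
        have := hFi.im
        simpa using this
      have hGnn : ∀ ω, 0 ≤ (F ω).im := by
        intro ω
        rw [hFdef]
        simp only
        rw [hFim E' ω]
        refine mul_nonneg (by positivity) ?_
        refine Finset.sum_nonneg fun k _ => div_nonneg hη0.le (by positivity)
      -- Markov
      have hmar := mul_meas_ge_le_integral_of_nonneg (μ := P n)
        (Eventually.of_forall hGnn) hGi ((2*(n:ℝ)*η)⁻¹)
      have hintim : ∫ ω, (F ω).im ∂(P n) = (∫ ω, F ω ∂(P n)).im := by
        have := integral_im (𝕜 := ℂ) hFi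
        simpa using this
      -- apply hloc
      have hloc' := hloc n hn1 z (by rw [hzre]; exact hEε j hj) (by rw [hzim]; exact hηδ)
      -- bound the im of the limit transform
      have hsq : (n:ℝ)^(-(a/4))/2 ≤ Real.sqrt (Metric.infDist E' (measSupport ν) + η) := by
        refine (Real.le_sqrt (by positivity) ?_).mpr ?_
        · have := hEdist j hj
          have h7 : (0:ℝ) ≤ (n:ℝ)^(-(a/2))/2 := by positivity
          nlinarith [hη0.le]
        · have hsq2 : ((n:ℝ)^(-(a/4))/2)^2 = (n:ℝ)^(-(a/2))/4 := by
            rw [div_pow]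
            norm_num
            rw [show ((n:ℝ)^(-(a/4)))^2 = (n:ℝ)^(-(a/4)) * (n:ℝ)^(-(a/4)) by ring, hrp]
            congr 1
            ring
          rw [hsq2]
          have := hEdist j hj
          linarith [hη0.le]
      have hν1 : (∫ t : ℝ, ((t : ℂ) - z)⁻¹ ∂ν).im ≤ 2*C*η*(n:ℝ)^(a/4) := by
        have h6 := hsqrt E' η hη0
        have h8 : C * η / Real.sqrt (Metric.infDist E' (measSupport ν) + η)
            ≤ C * η / ((n:ℝ)^(-(a/4))/2) := by
          refine div_le_div_of_nonneg_left (by positivity) (by positivity) hsq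
        have h9 : C * η / ((n:ℝ)^(-(a/4))/2) = 2*C*η*(n:ℝ)^(a/4) := by
          rw [Real.rpow_neg hnR0.le]
          field_simp
        calc (∫ t : ℝ, ((t : ℂ) - z)⁻¹ ∂ν).im
            ≤ C * η / Real.sqrt (Metric.infDist E' (measSupport ν) + η) := h6
          _ ≤ C * η / ((n:ℝ)^(-(a/4))/2) := h8
          _ = 2*C*η*(n:ℝ)^(a/4) := h9
      -- combine into the bound on the integral of Im
      have hIm1 : ∫ ω, (F ω).im ∂(P n) ≤ 2*C*η*(n:ℝ)^(a/4) + |εseq n| * (n:ℝ)^(-(1:ℝ)/2 - γ) := by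
        have h10 : (∫ ω, F ω ∂(P n)).im - (∫ t : ℝ, ((t : ℂ) - z)⁻¹ ∂ν).im
            ≤ ‖(∫ ω, F ω ∂(P n)) - ∫ t : ℝ, ((t : ℂ) - z)⁻¹ ∂ν‖ := by
          calc (∫ ω, F ω ∂(P n)).im - (∫ t : ℝ, ((t : ℂ) - z)⁻¹ ∂ν).im
              = ((∫ ω, F ω ∂(P n)) - ∫ t : ℝ, ((t : ℂ) - z)⁻¹ ∂ν).im := (Complex.sub_im _ _).symm
            _ ≤ |((∫ ω, F ω ∂(P n)) - ∫ t : ℝ, ((t : ℂ) - z)⁻¹ ∂ν).im| := le_abs_self _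
            _ ≤ ‖(∫ ω, F ω ∂(P n)) - ∫ t : ℝ, ((t : ℂ) - z)⁻¹ ∂ν‖ := Complex.abs_im_le_norm _
        have h11 : εseq n * (n:ℝ)^(-(1:ℝ)/2 - γ) ≤ |εseq n| * (n:ℝ)^(-(1:ℝ)/2 - γ) :=
          mul_le_mul_of_nonneg_right (le_abs_self _) (Real.rpow_nonneg hnR0.le _)
        rw [hintim]
        have hloc'' : ‖(∫ ω, F ω ∂(P n)) - ∫ t : ℝ, ((t : ℂ) - z)⁻¹ ∂ν‖
            ≤ εseq n * (n:ℝ)^(-(1:ℝ)/2 - γ) := hloc'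
        linarith
      -- conclude Markov bound
      have h2nη : 0 < 2*(n:ℝ)*η := by positivity
      have h12 : (P n {ω | (2*(n:ℝ)*η)⁻¹ ≤ (F ω).im}).toReal
          ≤ 2*(n:ℝ)*η * (2*C*η*(n:ℝ)^(a/4) + |εseq n| * (n:ℝ)^(-(1:ℝ)/2 - γ)) := by
        have h13 := le_trans hmar hIm1
        calc (P n {ω | (2*(n:ℝ)*η)⁻¹ ≤ (F ω).im}).toReal
            = (2*(n:ℝ)*η) * ((2*(n:ℝ)*η)⁻¹ *
                (P n {ω | (2*(n:ℝ)*η)⁻¹ ≤ (F ω).im}).toReal) := by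
              field_simp
          _ ≤ (2*(n:ℝ)*η) * (2*C*η*(n:ℝ)^(a/4) + |εseq n| * (n:ℝ)^(-(1:ℝ)/2 - γ)) := by
              refine mul_le_mul_of_nonneg_left ?_ h2nη.le
              exact h13
      exact h12
    -- coverage: on the concentration event, some grid point is η-close to λ₁
    set conc : Set (Ω n) := {ω | |lam n 0 ω - hatlam n| ≤ θ} with hconcdef
    have hsub : conc ⊆ ⋃ j ∈ Finset.range (M+1),
        {ω | (2*(n:ℝ)*η)⁻¹ ≤
          (((n:ℕ):ℂ)⁻¹ * ∑ k : Fin n, ((lam n k ω : ℂ) -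
            (((hatlam n - θ + j*η : ℝ) : ℂ) + (η : ℂ) * Complex.I))⁻¹).im} := by
      intro ω hω
      have hωθ : |lam n 0 ω - hatlam n| ≤ θ := hω
      set x : ℝ := lam n 0 ω - (hatlam n - θ) with hxdef
      have hx0 : 0 ≤ x := by
        rw [hxdef]
        have := abs_le.mp hωθ
        linarith [this.1]
      have hx2 : x ≤ 2*θ := by
        rw [hxdef]
        have := abs_le.mp hωθ
        linarith [this.2]
      set j : ℕ := ⌊x/η⌋₊ with hjdef
      have hjM : j ≤ M := Nat.floor_le_floor (by gcongr)
      have hjle : (j:ℝ)*η ≤ x := by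
        have := Nat.floor_le (by positivity : (0:ℝ) ≤ x/η)
        calc (j:ℝ)*η ≤ (x/η)*η := mul_le_mul_of_nonneg_right this hη0.le
          _ = x := div_mul_cancel₀ _ hη0.ne'
      have hjgt : x < ((j:ℝ)+1)*η := by
        have := Nat.lt_floor_add_one (x/η)
        have h14 : x/η < (j:ℝ)+1 := by exact_mod_cast this
        calc x = (x/η)*η := (div_mul_cancel₀ _ hη0.ne').symm
          _ < ((j:ℝ)+1)*η := by
              exact mul_lt_mul_of_pos_right h14 hη0
      refine Set.mem_biUnion (Finset.mem_range.mpr (Nat.lt_succ_of_le hjM)) ?_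
      simp only [Set.mem_setOf_eq]
      rw [hFim (hatlam n - θ + j*η) ω]
      have hclose0 : |lam n 0 ω - (hatlam n - θ + j*η)| ≤ η := by
        rw [show lam n 0 ω - (hatlam n - θ + j*η) = x - (j:ℝ)*η by rw [hxdef]; ring]
        rw [abs_le]
        constructor
        · linarith
        · nlinarith
      have hterm0 : η/(2*η^2) ≤ η / ((lam n 0 ω - (hatlam n - θ + j*η)) ^ 2 + η ^ 2) := by
        refine div_le_div_of_nonneg_left hη0.le (by positivity) ?_
        have := sq_le_sq' (neg_le_of_abs_le hclose0) (le_of_abs_le hclose0)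
        nlinarith
      have hsum0 : η/(2*η^2) ≤ ∑ k : Fin n, η / ((lam n k ω - (hatlam n - θ + j*η)) ^ 2 + η ^ 2) := by
        refine le_trans hterm0 ?_
        refine Finset.single_le_sum (f := fun k : Fin n =>
          η / ((lam n k ω - (hatlam n - θ + j*η)) ^ 2 + η ^ 2)) ?_ (Finset.mem_univ 0)
        intro k _
        exact div_nonneg hη0.le (by positivity)
      have heq : (2*(n:ℝ)*η)⁻¹ = ((n:ℕ):ℝ)⁻¹ * (η/(2*η^2)) := by
        field_simp
      rw [heq]
      exact mul_le_mul_of_nonneg_left hsum0 (by positivity)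
    -- probability of the concentration event is large
    have hfin := hP n
    have hPc : (3:ℝ)/4 ≤ (P n conc).toReal := by
      have hu : (Set.univ : Set (Ω n)) ⊆ conc ∪
          {ω | (n:ℝ)^(a/4 - 1/2) < |lam n 0 ω - hatlam n|} := by
        intro ω _
        rcases le_or_gt (|lam n 0 ω - hatlam n|) θ with h | h
        · exact Or.inl h
        · exact Or.inr h
      have h8 : (1:ℝ≥0∞) ≤ P n conc + P n {ω | (n:ℝ)^(a/4 - 1/2) < |lam n 0 ω - hatlam n|} := by
        rw [← measure_univ (μ := P n)]
        exact (measure_mono hu).trans (measure_union_le _ _)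
      have hne1 : P n conc ≠ ⊤ := measure_ne_top _ _
      have hne2 : P n {ω | (n:ℝ)^(a/4 - 1/2) < |lam n 0 ω - hatlam n|} ≠ ⊤ := measure_ne_top _ _
      have h9 : (1:ℝ) ≤ (P n conc).toReal +
          (P n {ω | (n:ℝ)^(a/4 - 1/2) < |lam n 0 ω - hatlam n|}).toReal := by
        have := ENNReal.toReal_mono (by finiteness) h8
        rwa [ENNReal.toReal_one, ENNReal.toReal_add hne1 hne2] at this
      have h10 : (P n {ω | (n:ℝ)^(a/4 - 1/2) < |lam n 0 ω - hatlam n|}).toReal ≤ 1/4 := by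
        have h11 := ENNReal.toReal_mono (by norm_num) h4.le
        rwa [show ((4⁻¹:ℝ≥0∞)).toReal = 1/4 by simp] at h11
      linarith
    -- union bound
    have hPcover : (P n conc).toReal ≤ ((M:ℝ)+1) * B := by
      have hstep1 : (P n conc).toReal ≤ ∑ j ∈ Finset.range (M+1),
          (P n {ω | (2*(n:ℝ)*η)⁻¹ ≤
            (((n:ℕ):ℂ)⁻¹ * ∑ k : Fin n, ((lam n k ω : ℂ) -
              (((hatlam n - θ + j*η : ℝ) : ℂ) + (η : ℂ) * Complex.I))⁻¹).im}).toReal := by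
        calc (P n conc).toReal
            ≤ (P n (⋃ j ∈ Finset.range (M+1),
              {ω | (2*(n:ℝ)*η)⁻¹ ≤
                (((n:ℕ):ℂ)⁻¹ * ∑ k : Fin n, ((lam n k ω : ℂ) -
                  (((hatlam n - θ + j*η : ℝ) : ℂ) + (η : ℂ) * Complex.I))⁻¹).im})).toReal :=
              ENNReal.toReal_mono (measure_ne_top _ _) (measure_mono hsub)
          _ ≤ (∑ j ∈ Finset.range (M+1), P n
              {ω | (2*(n:ℝ)*η)⁻¹ ≤
                (((n:ℕ):ℂ)⁻¹ * ∑ k : Fin n, ((lam n k ω : ℂ) -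
                  (((hatlam n - θ + j*η : ℝ) : ℂ) + (η : ℂ) * Complex.I))⁻¹).im}).toReal :=
              ENNReal.toReal_mono (WithTop.sum_ne_top.mpr fun j _ => measure_ne_top _ _) (measure_biUnion_finset_le _ _)
          _ = ∑ j ∈ Finset.range (M+1), (P n
              {ω | (2*(n:ℝ)*η)⁻¹ ≤
                (((n:ℕ):ℂ)⁻¹ * ∑ k : Fin n, ((lam n k ω : ℂ) -
                  (((hatlam n - θ + j*η : ℝ) : ℂ) + (η : ℂ) * Complex.I))⁻¹).im}).toReal :=
              ENNReal.toReal_sum fun _ _ => measure_ne_top _ _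
      refine hstep1.trans ?_
      calc (∑ j ∈ Finset.range (M+1), (P n
            {ω | (2*(n:ℝ)*η)⁻¹ ≤
              (((n:ℕ):ℂ)⁻¹ * ∑ k : Fin n, ((lam n k ω : ℂ) -
                (((hatlam n - θ + j*η : ℝ) : ℂ) + (η : ℂ) * Complex.I))⁻¹).im}).toReal)
          ≤ ∑ j ∈ Finset.range (M+1), B :=
            Finset.sum_le_sum fun j hj => hzbd j (Nat.lt_succ_iff.mp (Finset.mem_range.mp hj))
        _ = ((M:ℝ)+1) * B := by
            rw [Finset.sum_const, Finset.card_range, nsmul_eq_mul]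
            push_cast
            ring
    -- numeric bound on (M+1) * B
    have hB0 : 0 ≤ B := by
      rw [hBdef]
      have : (0:ℝ) ≤ 2*C*η*(n:ℝ)^(a/4) + |εseq n| * (n:ℝ)^(-(1:ℝ)/2 - γ) := by
        refine add_nonneg (by positivity) ?_
        exact mul_nonneg (abs_nonneg _) (Real.rpow_nonneg hnR0.le _)
      refine mul_nonneg (by positivity) this
    have hM3 : ((M:ℝ)+1) ≤ 3 * (n:ℝ)^(5*a/4) := by
      have hθη : 2*θ/η = 2*(n:ℝ)^(5*a/4) := by
        rw [hθdef, hηdef, mul_div_assoc, ← Real.rpow_sub hnR0]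
        congr 2
        ring
      have h1n : (1:ℝ) ≤ (n:ℝ)^(5*a/4) := by
        calc (1:ℝ) = (n:ℝ)^(0:ℝ) := (Real.rpow_zero _).symm
          _ ≤ (n:ℝ)^(5*a/4) := Real.rpow_le_rpow_of_exponent_le hnR1 (by positivity)
      have := hMle
      rw [hθη] at this
      linarith
    have hBle : ((M:ℝ)+1) * B ≤ 12*C*(n:ℝ)^(-(a/2)) + 6*|εseq n| := by
      have hstep1 : ((M:ℝ)+1)*B ≤ 3*(n:ℝ)^(5*a/4)*B := mul_le_mul_of_nonneg_right hM3 hB0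
      have p1 : (n:ℝ)^(5*a/4) * ((n:ℝ)^(1+(-(1:ℝ)/2-a)) * ((n:ℝ)^(-(1:ℝ)/2-a) * (n:ℝ)^(a/4)))
          = (n:ℝ)^(-(a/2)) := by
        rw [hrp, hrp, hrp]; congr 1; ring
      have p2 : (n:ℝ)^(5*a/4) * ((n:ℝ)^(1+(-(1:ℝ)/2-a)) * (n:ℝ)^(-(1:ℝ)/2-γ))
          = (n:ℝ)^(a/4-γ) := by
        rw [hrp, hrp]; congr 1; ring
      have en : (n:ℝ) * η = (n:ℝ)^(1 + (-(1:ℝ)/2 - a)) := by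
        rw [hηdef, Real.rpow_add hnR0, Real.rpow_one]
      have hstep2 : 3*(n:ℝ)^(5*a/4)*B
          = 12*C*(n:ℝ)^(-(a/2)) + 6*|εseq n| *(n:ℝ)^(a/4-γ) := by
        have hBeq : B = 2*((n:ℝ)*η)*(2*C*η*(n:ℝ)^(a/4) + |εseq n| *(n:ℝ)^(-(1:ℝ)/2-γ)) := by
          rw [hBdef]; ring
        rw [hBeq, en, hηdef]
        linear_combination (12*C) * p1 + (6*|εseq n|) * p2
      have hstep3 : 6*|εseq n| *(n:ℝ)^(a/4-γ) ≤ 6*|εseq n| := by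
        have h15 : (n:ℝ)^(a/4-γ) ≤ 1 :=
          Real.rpow_le_one_of_one_le_of_nonpos hnR1 (by linarith)
        calc 6*|εseq n| *(n:ℝ)^(a/4-γ) ≤ 6*|εseq n| *1 := by
              refine mul_le_mul_of_nonneg_left h15 (by positivity)
          _ = 6*|εseq n| := by ring
      calc ((M:ℝ)+1)*B ≤ 3*(n:ℝ)^(5*a/4)*B := hstep1
        _ = 12*C*(n:ℝ)^(-(a/2)) + 6*|εseq n| *(n:ℝ)^(a/4-γ) := hstep2
        _ ≤ 12*C*(n:ℝ)^(-(a/2)) + 6*|εseq n| := by linarith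
    -- contradiction
    linarith [hPc, hPcover, hBle, h3]
  -- Conclude by squeezing.
  refine tendsto_of_tendsto_of_tendsto_of_le_of_le' tendsto_const_nhds
    (hconc (a/4) (by positivity)) (Eventually.of_forall fun N => zero_le) ?_
  filter_upwards [key] with N hsub
  exact measure_mono hsub
end

section
/- Let δ>0. There exist k≥0 and a polynomial P in two variables with nonnegative coefficients, both depending only on δ, such that for every N∈ℕ, every B∈ℂ^{N×N} with ℓ²→ℓ² operator norm ‖B‖<1, and every n≥1: ‖Bⁿ‖₁ ≤ P(‖B‖_{2+δ}, (1−‖B‖)^{−1}) · n^k · ((1+‖B‖)/2)ⁿ. -/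
noncomputable def normDecay {N : ℕ} (β : ℝ) (A : Matrix (Fin N) (Fin N) ℂ) : ℝ :=
  Finset.fold max 0
    (fun p : Fin N × Fin N =>
      ‖A p.1 p.2‖ * (1 + |((p.1 : ℕ) : ℝ) - ((p.2 : ℕ) : ℝ)|) ^ β) Finset.univ

noncomputable def l2OpNorm {N : ℕ} (A : Matrix (Fin N) (Fin N) ℂ) : ℝ :=
  ‖LinearMap.toContinuousLinearMap (Matrix.toEuclideanLin A)‖

section Helpers
open scoped Matrix.Norms.L2Operator
open Matrix

lemma l2OpNorm_eq {N : ℕ} (A : Matrix (Fin N) (Fin N) ℂ) : l2OpNorm A = ‖A‖ := rfl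

lemma normDecay_nonneg {N : ℕ} (β : ℝ) (A : Matrix (Fin N) (Fin N) ℂ) :
    0 ≤ normDecay β A :=
  (Finset.le_fold_max _).2 (Or.inl le_rfl)

lemma le_normDecay {N : ℕ} (β : ℝ) (A : Matrix (Fin N) (Fin N) ℂ) (i j : Fin N) :
    ‖A i j‖ * (1 + |((i : ℕ) : ℝ) - ((j : ℕ) : ℝ)|) ^ β ≤ normDecay β A :=
  (Finset.le_fold_max _).2 (Or.inr ⟨(i, j), Finset.mem_univ _, le_rfl⟩)

lemma normDecay_le {N : ℕ} {β : ℝ} {A : Matrix (Fin N) (Fin N) ℂ} {c : ℝ} (h0 : 0 ≤ c)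
    (h : ∀ i j : Fin N, ‖A i j‖ * (1 + |((i : ℕ) : ℝ) - ((j : ℕ) : ℝ)|) ^ β ≤ c) :
    normDecay β A ≤ c :=
  (Finset.fold_max_le _).2 ⟨h0, fun p _ => h p.1 p.2⟩

-- real distance via Nat.dist
lemma dist_cast (a b : ℕ) : |((a : ℝ)) - (b : ℝ)| = (Nat.dist a b : ℝ) := by
  rcases le_total a b with h | h
  · rw [abs_sub_comm, abs_of_nonneg (by simp [sub_nonneg, Nat.cast_le.2 h]),
      Nat.dist, Nat.sub_eq_zero_of_le h, Nat.zero_add, Nat.cast_sub h]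
  · rw [abs_of_nonneg (by simp [sub_nonneg, Nat.cast_le.2 h]),
      Nat.dist, Nat.sub_eq_zero_of_le h, Nat.add_zero, Nat.cast_sub h]

open Finset in
/-- coordinate of a Euclidean vector is bounded by its norm -/
lemma coord_le_norm {N : ℕ} (y : EuclideanSpace ℂ (Fin N)) (p : Fin N) : ‖y p‖ ≤ ‖y‖ := by
  rw [EuclideanSpace.norm_eq]
  have : ‖y p‖ = Real.sqrt (‖y p‖ ^ 2) := by rw [Real.sqrt_sq (norm_nonneg _)]
  rw [this]
  apply Real.sqrt_le_sqrt
  exact Finset.single_le_sum (f := fun i => ‖y i‖ ^ 2) (fun i _ => sq_nonneg _) (mem_univ p)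

lemma entry_le_l2 {N : ℕ} (A : Matrix (Fin N) (Fin N) ℂ) (p q : Fin N) :
    ‖A p q‖ ≤ ‖A‖ := by
  have h := Matrix.l2_opNorm_mulVec A (EuclideanSpace.single q 1)
  rw [EuclideanSpace.norm_single] at h
  have h2 : ‖(A *ᵥ (EuclideanSpace.single q 1 : EuclideanSpace ℂ (Fin N))) p‖
      ≤ ‖(EuclideanSpace.equiv (Fin N) ℂ).symm (A *ᵥ (EuclideanSpace.single q (1:ℂ) : EuclideanSpace ℂ (Fin N)))‖ :=
    coord_le_norm ((EuclideanSpace.equiv (Fin N) ℂ).symm (A *ᵥ (EuclideanSpace.single q (1:ℂ) : EuclideanSpace ℂ (Fin N)))) p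
  have h3 : (A *ᵥ (EuclideanSpace.single q 1 : EuclideanSpace ℂ (Fin N))) p = A p q := by
    simp [Matrix.mulVec, dotProduct, EuclideanSpace.single_apply]
  calc ‖A p q‖ = ‖(A *ᵥ (EuclideanSpace.single q 1 : EuclideanSpace ℂ (Fin N))) p‖ := by rw [h3]
    _ ≤ _ := h2
    _ ≤ ‖A‖ * 1 := by simpa using h
    _ = ‖A‖ := mul_one _

open Finset in
lemma schur_bound {N : ℕ} (A : Matrix (Fin N) (Fin N) ℂ) {r : ℝ} (hr : 0 ≤ r)
    (hrow : ∀ p, ∑ q, ‖A p q‖ ≤ r) (hcol : ∀ q, ∑ p, ‖A p q‖ ≤ r) : ‖A‖ ≤ r := by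
  rw [Matrix.l2_opNorm_def]
  apply ContinuousLinearMap.opNorm_le_bound _ hr
  intro x
  have hx2 : ‖x‖ ^ 2 = ∑ j, ‖x j‖ ^ 2 := by
    rw [EuclideanSpace.norm_eq, Real.sq_sqrt (Finset.sum_nonneg fun j _ => sq_nonneg _)]
  have key : ∑ i, ‖∑ j, A i j * x j‖ ^ 2 ≤ (r * ‖x‖) ^ 2 := by
    have h1 : ∀ i, ‖∑ j, A i j * x j‖ ^ 2
        ≤ (∑ j, ‖A i j‖) * (∑ j, ‖A i j‖ * ‖x j‖ ^ 2) := by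
      intro i
      have hn : ‖∑ j, A i j * x j‖ ≤ ∑ j, ‖A i j‖ * ‖x j‖ :=
        (norm_sum_le _ _).trans (le_of_eq (by simp [norm_mul]))
      calc ‖∑ j, A i j * x j‖ ^ 2 ≤ (∑ j, ‖A i j‖ * ‖x j‖) ^ 2 :=
            pow_le_pow_left₀ (norm_nonneg _) hn 2
        _ = (∑ j, Real.sqrt ‖A i j‖ * (Real.sqrt ‖A i j‖ * ‖x j‖)) ^ 2 := by
            congr 1; apply Finset.sum_congr rfl; intro j _
            rw [← mul_assoc, Real.mul_self_sqrt (norm_nonneg _)]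
        _ ≤ (∑ j, Real.sqrt ‖A i j‖ ^ 2) * (∑ j, (Real.sqrt ‖A i j‖ * ‖x j‖) ^ 2) :=
            Finset.sum_mul_sq_le_sq_mul_sq _ _ _
        _ = (∑ j, ‖A i j‖) * (∑ j, ‖A i j‖ * ‖x j‖ ^ 2) := by
            simp [Real.sq_sqrt (norm_nonneg _), mul_pow]
    calc ∑ i, ‖∑ j, A i j * x j‖ ^ 2
        ≤ ∑ i, r * (∑ j, ‖A i j‖ * ‖x j‖ ^ 2) := by
          refine Finset.sum_le_sum fun i _ => (h1 i).trans ?_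
          exact mul_le_mul_of_nonneg_right (hrow i)
            (Finset.sum_nonneg fun j _ => mul_nonneg (norm_nonneg _) (sq_nonneg _))
      _ = r * ∑ j, (∑ i, ‖A i j‖) * ‖x j‖ ^ 2 := by
          rw [← Finset.mul_sum, Finset.sum_comm]
          congr 1; apply Finset.sum_congr rfl; intro j _
          rw [Finset.sum_mul]
      _ ≤ r * ∑ j, r * ‖x j‖ ^ 2 := by
          apply mul_le_mul_of_nonneg_left _ hr
          exact Finset.sum_le_sum fun j _ =>
            mul_le_mul_of_nonneg_right (hcol j) (sq_nonneg _)
      _ = (r * ‖x‖) ^ 2 := by rw [← Finset.mul_sum, ← hx2]; ring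
  have hnorm : ‖(Matrix.toEuclideanLin (𝕜 := ℂ) (m := Fin N) (n := Fin N)).trans
      LinearMap.toContinuousLinearMap A x‖ ^ 2 = ∑ i, ‖∑ j, A i j * x j‖ ^ 2 := by
    rw [EuclideanSpace.norm_eq, Real.sq_sqrt (Finset.sum_nonneg fun i _ => sq_nonneg _)]
    rfl
  have h4 : ‖(Matrix.toEuclideanLin (𝕜 := ℂ) (m := Fin N) (n := Fin N)).trans
      LinearMap.toContinuousLinearMap A x‖ ^ 2 ≤ (r * ‖x‖) ^ 2 := hnorm ▸ key
  exact (pow_le_pow_iff_left₀ (norm_nonneg _) (mul_nonneg hr (norm_nonneg _)) two_ne_zero).1 h4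

open Finset in
lemma sum_dist_le {N : ℕ} (g : ℕ → ℝ) (hg : ∀ m, 0 ≤ g m) (hsum : Summable g) (p : Fin N) :
    ∑ q : Fin N, g (Nat.dist (p : ℕ) (q : ℕ)) ≤ 2 * ∑' m, g m := by
  have hsplit : (univ : Finset (Fin N)) =
      (univ.filter (fun q : Fin N => (q : ℕ) ≤ (p : ℕ))) ∪
      (univ.filter (fun q : Fin N => (p : ℕ) < (q : ℕ))) := by
    ext q
    simp only [Finset.mem_union, Finset.mem_filter, Finset.mem_univ, true_and, iff_true]
    exact (iff_true_intro (le_or_gt (q:ℕ) (p:ℕ))).symm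
  have hdisj : Disjoint (univ.filter (fun q : Fin N => (q : ℕ) ≤ (p : ℕ)))
      (univ.filter (fun q : Fin N => (p : ℕ) < (q : ℕ))) := by
    simp [Finset.disjoint_filter]
  rw [hsplit, Finset.sum_union hdisj]
  have h1 : ∑ q ∈ univ.filter (fun q : Fin N => (q : ℕ) ≤ (p : ℕ)),
      g (Nat.dist (p : ℕ) (q : ℕ)) ≤ ∑' m, g m := by
    have : ∑ q ∈ univ.filter (fun q : Fin N => (q : ℕ) ≤ (p : ℕ)),
        g (Nat.dist (p : ℕ) (q : ℕ))
        = ∑ m ∈ (univ.filter (fun q : Fin N => (q : ℕ) ≤ (p : ℕ))).image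
            (fun q : Fin N => (p : ℕ) - (q : ℕ)), g m := by
      rw [Finset.sum_image]
      · apply Finset.sum_congr rfl
        intro q hq
        simp only [Finset.mem_filter, Finset.mem_univ, true_and] at hq
        congr 1
        simp [Nat.dist, Nat.sub_eq_zero_of_le hq]
      · intro q1 h1 q2 h2 h
        simp only [Finset.mem_coe, Finset.mem_filter, Finset.mem_univ, true_and] at h1 h2 h
        exact Fin.ext (by omega)
    rw [this]
    exact Summable.sum_le_tsum _ (fun m _ => hg m) hsum
  have h2 : ∑ q ∈ univ.filter (fun q : Fin N => (p : ℕ) < (q : ℕ)),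
      g (Nat.dist (p : ℕ) (q : ℕ)) ≤ ∑' m, g m := by
    have : ∑ q ∈ univ.filter (fun q : Fin N => (p : ℕ) < (q : ℕ)),
        g (Nat.dist (p : ℕ) (q : ℕ))
        = ∑ m ∈ (univ.filter (fun q : Fin N => (p : ℕ) < (q : ℕ))).image
            (fun q : Fin N => (q : ℕ) - (p : ℕ)), g m := by
      rw [Finset.sum_image]
      · apply Finset.sum_congr rfl
        intro q hq
        simp only [Finset.mem_filter, Finset.mem_univ, true_and] at hq
        congr 1
        simp [Nat.dist, Nat.sub_eq_zero_of_le hq.le]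
      · intro q1 h1 q2 h2 h
        simp only [Finset.mem_coe, Finset.mem_filter, Finset.mem_univ, true_and] at h1 h2 h
        exact Fin.ext (by omega)
    rw [this]
    exact Summable.sum_le_tsum _ (fun m _ => hg m) hsum
  linarith

lemma summable_aux {e : ℝ} (he : 1 < e) :
    Summable (fun m : ℕ => ((m : ℝ) + 1) ^ (-e)) := by
  have h := (Real.summable_nat_rpow_inv (p := e)).2 he
  have h2 := (summable_nat_add_iff (f := fun n : ℕ => ((n : ℝ) ^ e)⁻¹) 1).2 h
  refine h2.congr fun m => ?_
  rw [← Real.rpow_neg (by positivity)]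
  push_cast
  ring_nf

lemma telescope {R : Type*} [Ring R] (B S : R) (n : ℕ) :
    B ^ n - S ^ n = ∑ k ∈ Finset.range n, B ^ k * (B - S) * S ^ (n - 1 - k) := by
  induction n with
  | zero => simp
  | succ n ih =>
    have e1 : B ^ (n + 1) - S ^ (n + 1) = (B - S) * S ^ n + B * (B ^ n - S ^ n) := by
      rw [pow_succ', pow_succ', mul_sub, sub_mul]; abel
    rw [e1, ih, Finset.mul_sum, Finset.sum_range_succ', add_comm ((B - S) * S ^ n)]
    congr 1
    · apply Finset.sum_congr rfl
      intro k hk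
      have : n + 1 - 1 - (k + 1) = n - 1 - k := by omega
      rw [this, ← mul_assoc, ← mul_assoc, ← pow_succ']
    · simp

lemma S_pow_vanish {N : ℕ} (S : Matrix (Fin N) (Fin N) ℂ) (t : ℝ)
    (hS : ∀ p q : Fin N, t ≤ |((p : ℕ) : ℝ) - ((q : ℕ) : ℝ)| → S p q = 0) :
    ∀ m : ℕ, 1 ≤ m → ∀ p q : Fin N, (m : ℝ) * t ≤ |((p : ℕ) : ℝ) - ((q : ℕ) : ℝ)| →
      (S ^ m) p q = 0 := by
  intro m
  induction m with
  | zero => omega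
  | succ m ih =>
    intro _ p q hpq
    rcases Nat.eq_or_lt_of_le (Nat.one_le_iff_ne_zero.2 (Nat.succ_ne_zero m)) with h1 | h1
    · have hm : m = 0 := by omega
      subst hm
      rw [pow_one]
      exact hS p q (by push_cast at hpq ⊢; linarith)
    · have hm : 1 ≤ m := by omega
      rw [pow_succ, Matrix.mul_apply]
      apply Finset.sum_eq_zero
      intro r _
      by_cases hr : (m : ℝ) * t ≤ |((p : ℕ) : ℝ) - ((r : ℕ) : ℝ)|
      · rw [ih hm p r hr, zero_mul]
      · push_neg at hr
        have htri : |((p : ℕ) : ℝ) - ((q : ℕ) : ℝ)| ≤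
            |((p : ℕ) : ℝ) - ((r : ℕ) : ℝ)| + |((r : ℕ) : ℝ) - ((q : ℕ) : ℝ)| :=
          abs_sub_le _ _ _
        have : t ≤ |((r : ℕ) : ℝ) - ((q : ℕ) : ℝ)| := by push_cast at hpq; linarith
        rw [hS r q this, mul_zero]

open scoped Matrix.Norms.L2Operator in
lemma norm_mul_pow_right {N : ℕ} (E S : Matrix (Fin N) (Fin N) ℂ) :
    ∀ m : ℕ, ‖E * S ^ m‖ ≤ ‖E‖ * ‖S‖ ^ m := by
  intro m
  induction m with
  | zero => simp
  | succ m ih =>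
    rw [pow_succ, pow_succ, ← mul_assoc]
    calc ‖E * S ^ m * S‖ ≤ ‖E * S ^ m‖ * ‖S‖ := Matrix.l2_opNorm_mul _ _
      _ ≤ ‖E‖ * ‖S‖ ^ m * ‖S‖ :=
        mul_le_mul_of_nonneg_right ih (norm_nonneg _)
      _ = ‖E‖ * (‖S‖ ^ m * ‖S‖) := by ring

open scoped Matrix.Norms.L2Operator in
lemma norm_pow_mul_left {N : ℕ} (B F : Matrix (Fin N) (Fin N) ℂ) :
    ∀ k : ℕ, ‖B ^ k * F‖ ≤ ‖B‖ ^ k * ‖F‖ := by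
  intro k
  induction k with
  | zero => simp
  | succ k ih =>
    rw [pow_succ', pow_succ', mul_assoc]
    calc ‖B * (B ^ k * F)‖ ≤ ‖B‖ * ‖B ^ k * F‖ := Matrix.l2_opNorm_mul _ _
      _ ≤ ‖B‖ * (‖B‖ ^ k * ‖F‖) :=
        mul_le_mul_of_nonneg_left ih (norm_nonneg _)
      _ = ‖B‖ * ‖B‖ ^ k * ‖F‖ := by ring


lemma l2_nonneg {N : ℕ} (A : Matrix (Fin N) (Fin N) ℂ) : 0 ≤ l2OpNorm A := by
  rw [l2OpNorm_eq]; exact norm_nonneg A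

lemma l2_pow_le {N : ℕ} (B : Matrix (Fin N) (Fin N) ℂ) {n : ℕ} (hn : 1 ≤ n) :
    l2OpNorm (B ^ n) ≤ l2OpNorm B ^ n := by
  rw [l2OpNorm_eq, l2OpNorm_eq]
  exact norm_pow_le' B (by omega)

lemma entry_le_l2' {N : ℕ} (A : Matrix (Fin N) (Fin N) ℂ) (p q : Fin N) :
    ‖A p q‖ ≤ l2OpNorm A := by
  rw [l2OpNorm_eq]; exact entry_le_l2 A p q

lemma schur_bound' {N : ℕ} (A : Matrix (Fin N) (Fin N) ℂ) {r : ℝ} (hr : 0 ≤ r)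
    (hrow : ∀ p, ∑ q, ‖A p q‖ ≤ r) (hcol : ∀ q, ∑ p, ‖A p q‖ ≤ r) : l2OpNorm A ≤ r := by
  rw [l2OpNorm_eq]; exact schur_bound A hr hrow hcol

lemma l2_sub_bound {N : ℕ} (B S : Matrix (Fin N) (Fin N) ℂ) :
    l2OpNorm S ≤ l2OpNorm B + l2OpNorm (B - S) := by
  simp only [l2OpNorm_eq]
  calc ‖S‖ = ‖B - (B - S)‖ := by rw [sub_sub_cancel]
    _ ≤ ‖B‖ + ‖B - S‖ := norm_sub_le _ _

lemma entry_prod_bound {N : ℕ} (B C S : Matrix (Fin N) (Fin N) ℂ) (k m : ℕ) (i j : Fin N) :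
    ‖(B ^ k * C * S ^ m) i j‖ ≤ l2OpNorm B ^ k * (l2OpNorm C * l2OpNorm S ^ m) := by
  simp only [l2OpNorm_eq]
  calc ‖(B ^ k * C * S ^ m) i j‖
      ≤ ‖B ^ k * C * S ^ m‖ := entry_le_l2 _ _ _
    _ = ‖B ^ k * (C * S ^ m)‖ := by rw [mul_assoc]
    _ ≤ ‖B‖ ^ k * ‖C * S ^ m‖ := norm_pow_mul_left _ _ _
    _ ≤ ‖B‖ ^ k * (‖C‖ * ‖S‖ ^ m) :=
        mul_le_mul_of_nonneg_left (norm_mul_pow_right _ _ _) (pow_nonneg (norm_nonneg _) k)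

end Helpers

set_option maxHeartbeats 2000000 in
/-- For `δ > 0` there are `k ≥ 0` and a polynomial `P` in two variables with
nonnegative coefficients, both depending only on `δ`, such that for every matrix `B` with
`‖B‖ < 1` and every `n ≥ 1`:
`‖Bⁿ‖₁ ≤ P(‖B‖_{2+δ}, (1−‖B‖)⁻¹) · n^k · ((1+‖B‖)/2)ⁿ`. -/
theorem power_normDecay_bound (δ : ℝ) (hδ : 0 < δ) :
    ∃ k : ℝ, 0 ≤ k ∧ ∃ P : MvPolynomial (Fin 2) ℝ, (∀ m, 0 ≤ P.coeff m) ∧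
      ∀ (N : ℕ) (B : Matrix (Fin N) (Fin N) ℂ), l2OpNorm B < 1 →
        ∀ n : ℕ, 1 ≤ n →
          normDecay 1 (B ^ n) ≤
            MvPolynomial.eval (![normDecay (2 + δ) B, (1 - l2OpNorm B)⁻¹]) P *
              (n : ℝ) ^ k * ((1 + l2OpNorm B) / 2) ^ n := by
  set e : ℝ := 1 + δ / 2 with he_def
  clear_value e
  have he : (1:ℝ) < e := by rw [he_def]; linarith
  have he0 : (0:ℝ) < e := by linarith
  have hgsum : Summable (fun m : ℕ => ((m : ℝ) + 1) ^ (-e)) := summable_aux he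
  have hgnn : ∀ m : ℕ, 0 ≤ ((m : ℝ) + 1) ^ (-e) :=
    fun m => Real.rpow_nonneg (by positivity) _
  set K : ℝ := 2 * ∑' m : ℕ, ((m : ℝ) + 1) ^ (-e) with hK_def
  have hK0 : 0 ≤ K := by
    have : 0 ≤ ∑' m : ℕ, ((m : ℝ) + 1) ^ (-e) := tsum_nonneg hgnn
    rw [hK_def]; linarith
  have hKsum : ∀ p : ℝ, p ≤ 2 * ∑' m : ℕ, ((m : ℝ) + 1) ^ (-e) → p ≤ K := by
    intro p hp; rw [hK_def]; exact hp
  clear_value K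
  refine ⟨1 + e, by linarith, ?_⟩
  refine ⟨MvPolynomial.monomial 0 1 + MvPolynomial.monomial (Finsupp.single 0 1) (2*K)
    + MvPolynomial.monomial (Finsupp.single 0 1 + Finsupp.single 1 1) (2*K), ?_, ?_⟩
  · intro m
    simp only [MvPolynomial.coeff_add, MvPolynomial.coeff_monomial]
    split_ifs <;> norm_num <;> linarith
  intro N B hB n hn
  set b : ℝ := l2OpNorm B with hbdef
  have hb0 : 0 ≤ b := hbdef ▸ l2_nonneg B
  clear_value b
  have hb1 : b < 1 := hB
  set M : ℝ := normDecay (2 + δ) B with hMdef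
  have hM0 : 0 ≤ M := hMdef ▸ normDecay_nonneg _ _
  have hMentry : ∀ p q : Fin N,
      ‖B p q‖ * (1 + |((p : ℕ) : ℝ) - ((q : ℕ) : ℝ)|) ^ ((2:ℝ) + δ) ≤ M :=
    fun p q => hMdef ▸ le_normDecay (2 + δ) B p q
  clear_value M
  set y : ℝ := (1 - b)⁻¹ with hydef
  clear_value y
  have hy0 : 0 < y := by rw [hydef]; exact inv_pos.2 (by linarith)
  have hyb : y * (1 - b) = 1 := by rw [hydef]; exact inv_mul_cancel₀ (by linarith)
  have hn1 : (1:ℝ) ≤ (n:ℝ) := by exact_mod_cast hn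
  have hn0 : (0:ℝ) < n := by linarith
  set Q : ℝ := (1 + b) / 2 with hQdef
  clear_value Q
  have hQhalf : (1:ℝ)/2 ≤ Q := by rw [hQdef]; linarith
  have hQ0 : (0:ℝ) < Q := by linarith
  have hbQ : b ≤ Q := by rw [hQdef]; linarith
  have hPeval : MvPolynomial.eval (![M, y]) (MvPolynomial.monomial 0 1
      + MvPolynomial.monomial (Finsupp.single 0 1) (2*K)
      + MvPolynomial.monomial (Finsupp.single 0 1 + Finsupp.single 1 1) (2*K))
      = 1 + 2*K*M + 2*K*M*y := by
    simp [MvPolynomial.eval_monomial, Finsupp.prod_add_index, Finsupp.prod_single_index,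
      pow_succ]
    ring
  rw [hPeval]
  have hKMy : 0 ≤ 2*K*M*y := by positivity
  have hKM : 0 ≤ 2*K*M := by positivity
  have hP1 : (1:ℝ) ≤ 1 + 2*K*M + 2*K*M*y := by linarith
  have hnk1 : (1:ℝ) ≤ (n:ℝ) ^ ((1:ℝ)+e) := by
    have h := Real.rpow_le_rpow_of_exponent_le hn1 (show (0:ℝ) ≤ 1+e by linarith)
    rwa [Real.rpow_zero] at h
  have hnkn : (n:ℝ) ≤ (n:ℝ) ^ ((1:ℝ)+e) := by
    calc (n:ℝ) = (n:ℝ) ^ (1:ℝ) := (Real.rpow_one _).symm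
      _ ≤ _ := Real.rpow_le_rpow_of_exponent_le hn1 (by linarith)
  have hnk0 : (0:ℝ) ≤ (n:ℝ) ^ ((1:ℝ)+e) := by linarith
  have hQn0 : (0:ℝ) ≤ Q ^ n := pow_nonneg hQ0.le n
  have hpow1e : (n:ℝ) * (n:ℝ) ^ e = (n:ℝ) ^ ((1:ℝ)+e) := by
    rw [Real.rpow_add hn0, Real.rpow_one]
  have hbn : l2OpNorm (B ^ n) ≤ b ^ n := by rw [hbdef]; exact l2_pow_le B hn
  apply normDecay_le (by positivity)
  intro i j
  rw [Real.rpow_one]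
  have hentry_b : ‖(B ^ n) i j‖ ≤ b ^ n := (entry_le_l2' _ i j).trans hbn
  have hbQn : b ^ n ≤ Q ^ n := pow_le_pow_left₀ hb0 hbQ n
  by_cases hij : (i : ℕ) = (j : ℕ)
  · have hzero : |((i : ℕ) : ℝ) - ((j : ℕ) : ℝ)| = 0 := by rw [hij]; simp
    rw [hzero]
    calc ‖(B ^ n) i j‖ * (1 + 0) = ‖(B ^ n) i j‖ := by ring
      _ ≤ b ^ n := hentry_b
      _ ≤ Q ^ n := hbQn
      _ = 1 * 1 * Q ^ n := by ring
      _ ≤ (1 + 2*K*M + 2*K*M*y) * (n:ℝ) ^ ((1:ℝ)+e) * Q ^ n := by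
          apply mul_le_mul_of_nonneg_right _ hQn0
          exact mul_le_mul hP1 hnk1 zero_le_one (by linarith)
  -- off-diagonal case
  set d : ℝ := |((i : ℕ) : ℝ) - ((j : ℕ) : ℝ)| with hddef
  have hd1 : (1:ℝ) ≤ d := by
    rw [hddef, dist_cast]
    have h1 : 1 ≤ Nat.dist (i : ℕ) (j : ℕ) := by
      have : Nat.dist (i : ℕ) (j : ℕ) ≠ 0 := fun h => hij (Nat.eq_of_dist_eq_zero h)
      omega
    exact_mod_cast h1
  clear_value d
  have hd0 : (0:ℝ) < d := by linarith
  set t : ℝ := d / n with htdef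
  have ht0 : (0:ℝ) < t := by rw [htdef]; positivity
  have hnt : (n:ℝ) * t = d := by rw [htdef, mul_div_cancel₀ _ (ne_of_gt hn0)]
  clear_value t
  set S : Matrix (Fin N) (Fin N) ℂ :=
    Matrix.of (fun p q => if |((p : ℕ) : ℝ) - ((q : ℕ) : ℝ)| < t then B p q else 0) with hSdef
  clear_value S
  have hSentry : ∀ p q : Fin N, t ≤ |((p : ℕ) : ℝ) - ((q : ℕ) : ℝ)| → S p q = 0 := by
    intro p q h
    simp only [hSdef, Matrix.of_apply]
    rw [if_neg (not_lt.2 h)]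
  set ε : ℝ := K * M * (n:ℝ) ^ e * (1 + d) ^ (-e) with hεdef
  clear_value ε
  have hε0 : 0 ≤ ε := by
    rw [hεdef]
    apply mul_nonneg (mul_nonneg (mul_nonneg hK0 hM0) (Real.rpow_nonneg hn0.le _))
    exact Real.rpow_nonneg (by linarith) _
  -- entrywise decay bound for B
  have hBentry : ∀ p q : Fin N, ‖B p q‖
      ≤ M * ((1 : ℝ) + (Nat.dist (p : ℕ) (q : ℕ) : ℝ)) ^ (-((2:ℝ)+δ)) := by
    intro p q
    have h := hMentry p q
    rw [dist_cast] at h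
    have hpos : (0:ℝ) < ((1 : ℝ) + (Nat.dist (p : ℕ) (q : ℕ) : ℝ)) ^ ((2:ℝ)+δ) :=
      Real.rpow_pos_of_pos (by positivity) _
    rw [Real.rpow_neg (by positivity), ← div_eq_mul_inv, le_div_iff₀ hpos]
    exact h
  -- key per-entry bound for B - S
  have hkey : ∀ p q : Fin N, ‖(B - S) p q‖
      ≤ (M * (1 + t) ^ (-e)) * ((Nat.dist (p : ℕ) (q : ℕ) : ℝ) + 1) ^ (-e) := by
    intro p q
    have hnn : 0 ≤ (M * (1 + t) ^ (-e)) * ((Nat.dist (p : ℕ) (q : ℕ) : ℝ) + 1) ^ (-e) := by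
      apply mul_nonneg (mul_nonneg hM0 (Real.rpow_nonneg (by linarith) _))
      exact Real.rpow_nonneg (by positivity) _
    rw [Matrix.sub_apply]
    by_cases h : |((p : ℕ) : ℝ) - ((q : ℕ) : ℝ)| < t
    · simp only [hSdef, Matrix.of_apply, if_pos h, sub_self, norm_zero]
      exact hnn
    · push_neg at h
      simp only [hSdef, Matrix.of_apply, if_neg (not_lt.2 h), sub_zero]
      rw [dist_cast] at h
      have hm0 : (0:ℝ) ≤ (Nat.dist (p : ℕ) (q : ℕ) : ℝ) := Nat.cast_nonneg _
      have h1 : ‖B p q‖ ≤ M * (1 + (Nat.dist (p : ℕ) (q : ℕ) : ℝ)) ^ (-((2:ℝ)+δ)) :=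
        hBentry p q
      have hsplit : ((1:ℝ) + (Nat.dist (p : ℕ) (q : ℕ) : ℝ)) ^ (-((2:ℝ)+δ))
          = (1 + (Nat.dist (p : ℕ) (q : ℕ) : ℝ)) ^ (-e)
            * (1 + (Nat.dist (p : ℕ) (q : ℕ) : ℝ)) ^ (-e) := by
        rw [← Real.rpow_add (by positivity)]
        congr 1
        rw [he_def]; ring
      have hmono : ((1:ℝ) + (Nat.dist (p : ℕ) (q : ℕ) : ℝ)) ^ (-e) ≤ (1 + t) ^ (-e) := by
        rw [Real.rpow_le_rpow_iff_of_neg (by linarith) (by positivity) (by linarith)]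
        linarith
      calc ‖B p q‖
          ≤ M * ((1 + (Nat.dist (p : ℕ) (q : ℕ) : ℝ)) ^ (-e)
            * (1 + (Nat.dist (p : ℕ) (q : ℕ) : ℝ)) ^ (-e)) := by rw [← hsplit]; exact h1
        _ ≤ M * ((1 + t) ^ (-e) * (1 + (Nat.dist (p : ℕ) (q : ℕ) : ℝ)) ^ (-e)) := by
            apply mul_le_mul_of_nonneg_left _ hM0
            exact mul_le_mul_of_nonneg_right hmono (Real.rpow_nonneg (by positivity) _)
        _ = (M * (1 + t) ^ (-e)) * ((Nat.dist (p : ℕ) (q : ℕ) : ℝ) + 1) ^ (-e) := by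
            rw [add_comm (1:ℝ) ((Nat.dist (p : ℕ) (q : ℕ) : ℝ))]; ring
  -- the factor comparison : M (1+t)^{-e} K ≤ ε
  have hfactor : M * (1 + t) ^ (-e) * K ≤ ε := by
    have h1 : ((1:ℝ) + d) / (n:ℝ) ≤ 1 + t := by
      rw [htdef, add_div]
      have : (1:ℝ)/(n:ℝ) ≤ 1 := by
        rw [div_le_one hn0]; exact hn1
      linarith
    have h2 : ((1:ℝ) + t) ^ (-e) ≤ ((1 + d) / (n:ℝ)) ^ (-e) := by
      rw [Real.rpow_le_rpow_iff_of_neg (by linarith) (div_pos (by linarith) hn0) (by linarith)]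
      exact h1
    have h3 : (((1:ℝ) + d) / (n:ℝ)) ^ (-e) = (n:ℝ) ^ e * (1 + d) ^ (-e) := by
      rw [Real.div_rpow (by linarith) hn0.le, Real.rpow_neg (by linarith),
        Real.rpow_neg hn0.le]
      rw [div_eq_mul_inv, inv_inv]
      ring
    calc M * (1 + t) ^ (-e) * K ≤ M * ((n:ℝ) ^ e * (1 + d) ^ (-e)) * K := by
          apply mul_le_mul_of_nonneg_right _ hK0
          apply mul_le_mul_of_nonneg_left _ hM0
          rw [← h3]; exact h2
      _ = ε := by rw [hεdef]; ring
  have hrow : ∀ p, ∑ q, ‖(B - S) p q‖ ≤ ε := by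
    intro p
    calc ∑ q, ‖(B - S) p q‖
        ≤ ∑ q : Fin N, (M * (1 + t) ^ (-e)) * ((Nat.dist (p : ℕ) (q : ℕ) : ℝ) + 1) ^ (-e) :=
          Finset.sum_le_sum fun q _ => hkey p q
      _ = (M * (1 + t) ^ (-e)) * ∑ q : Fin N, ((Nat.dist (p : ℕ) (q : ℕ) : ℝ) + 1) ^ (-e) := by
          rw [Finset.mul_sum]
      _ ≤ (M * (1 + t) ^ (-e)) * K := by
          apply mul_le_mul_of_nonneg_left
          · apply hKsum
            exact sum_dist_le (fun m => ((m : ℝ) + 1) ^ (-e)) hgnn hgsum p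
          · exact mul_nonneg hM0 (Real.rpow_nonneg (by linarith) _)
      _ ≤ ε := hfactor
  have hcol : ∀ q, ∑ p, ‖(B - S) p q‖ ≤ ε := by
    intro q
    calc ∑ p, ‖(B - S) p q‖
        ≤ ∑ p : Fin N, (M * (1 + t) ^ (-e)) * ((Nat.dist (q : ℕ) (p : ℕ) : ℝ) + 1) ^ (-e) := by
          apply Finset.sum_le_sum fun p _ => ?_
          rw [Nat.dist_comm]
          exact hkey p q
      _ = (M * (1 + t) ^ (-e)) * ∑ p : Fin N, ((Nat.dist (q : ℕ) (p : ℕ) : ℝ) + 1) ^ (-e) := by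
          rw [Finset.mul_sum]
      _ ≤ (M * (1 + t) ^ (-e)) * K := by
          apply mul_le_mul_of_nonneg_left
          · apply hKsum
            exact sum_dist_le (fun m => ((m : ℝ) + 1) ^ (-e)) hgnn hgsum q
          · exact mul_nonneg hM0 (Real.rpow_nonneg (by linarith) _)
      _ ≤ ε := hfactor
  have hBS : l2OpNorm (B - S) ≤ ε := schur_bound' _ hε0 hrow hcol
  have hSnorm : l2OpNorm S ≤ b + ε := by
    have h := l2_sub_bound B S
    rw [← hbdef] at h
    linarith
  have hvan : (S ^ n) i j = 0 := by
    apply S_pow_vanish S t hSentry n hn i j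
    rw [hnt, ← hddef]
  have hexp : (B ^ n) i j = ∑ k ∈ Finset.range n, (B ^ k * (B - S) * S ^ (n - 1 - k)) i j := by
    have h2 := congrArg (fun A : Matrix (Fin N) (Fin N) ℂ => A i j) (telescope B S n)
    simp only [Matrix.sub_apply, hvan, sub_zero, Matrix.sum_apply] at h2
    exact h2
  have hterm : ∀ k ∈ Finset.range n,
      ‖(B ^ k * (B - S) * S ^ (n - 1 - k)) i j‖
        ≤ b ^ k * (ε * l2OpNorm S ^ (n - 1 - k)) := by
    intro k _
    calc ‖(B ^ k * (B - S) * S ^ (n - 1 - k)) i j‖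
        ≤ l2OpNorm B ^ k * (l2OpNorm (B - S) * l2OpNorm S ^ (n - 1 - k)) :=
          entry_prod_bound B (B - S) S k (n - 1 - k) i j
      _ ≤ b ^ k * (ε * l2OpNorm S ^ (n - 1 - k)) := by
          rw [← hbdef]
          apply mul_le_mul_of_nonneg_left _ (pow_nonneg hb0 k)
          exact mul_le_mul_of_nonneg_right hBS (pow_nonneg (l2_nonneg _) _)
  have hsum : ‖(B ^ n) i j‖ ≤ ∑ k ∈ Finset.range n, b ^ k * (ε * l2OpNorm S ^ (n - 1 - k)) := by
    rw [hexp]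
    exact (norm_sum_le _ _).trans (Finset.sum_le_sum hterm)
  by_cases hcase : ε ≤ (1 - b) / 2
  · -- case 1 : small perturbation
    have hSQ : l2OpNorm S ≤ Q := by rw [hQdef]; linarith
    have hterm2 : ∀ k ∈ Finset.range n,
        b ^ k * (ε * l2OpNorm S ^ (n - 1 - k)) ≤ ε * Q ^ (n-1) := by
      intro k hk
      have hkn : k + (n - 1 - k) = n - 1 := by
        have := Finset.mem_range.1 hk; omega
      calc b ^ k * (ε * l2OpNorm S ^ (n - 1 - k)) ≤ Q ^ k * (ε * Q ^ (n - 1 - k)) := by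
            apply mul_le_mul (pow_le_pow_left₀ hb0 hbQ k)
            · exact mul_le_mul_of_nonneg_left
                (pow_le_pow_left₀ (l2_nonneg _) hSQ _) hε0
            · exact mul_nonneg hε0 (pow_nonneg (l2_nonneg _) _)
            · exact pow_nonneg hQ0.le _
        _ = ε * (Q ^ k * Q ^ (n - 1 - k)) := by ring
        _ = ε * Q ^ (n-1) := by rw [← pow_add, hkn]
    have hsum2 : ‖(B ^ n) i j‖ ≤ (n:ℝ) * (ε * Q ^ (n-1)) := by
      calc ‖(B ^ n) i j‖ ≤ ∑ k ∈ Finset.range n, b ^ k * (ε * l2OpNorm S ^ (n - 1 - k)) := hsum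
        _ ≤ ∑ _k ∈ Finset.range n, ε * Q ^ (n-1) := Finset.sum_le_sum hterm2
        _ = (n:ℝ) * (ε * Q ^ (n-1)) := by
            rw [Finset.sum_const, Finset.card_range, nsmul_eq_mul]
    have hεd : ε * (1 + d) ≤ K * M * (n:ℝ) ^ e := by
      have h1 : ((1:ℝ) + d) ^ (-e) * (1 + d) = (1 + d) ^ ((1:ℝ) - e) := by
        nth_rewrite 2 [← Real.rpow_one (1 + d)]
        rw [← Real.rpow_add (by linarith)]
        congr 1; ring
      have h2 : ((1:ℝ) + d) ^ ((1:ℝ) - e) ≤ 1 :=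
        Real.rpow_le_one_of_one_le_of_nonpos (by linarith) (by linarith)
      calc ε * (1 + d) = K * M * (n:ℝ) ^ e * ((1 + d) ^ (-e) * (1 + d)) := by
            rw [hεdef]; ring
        _ = K * M * (n:ℝ) ^ e * (1 + d) ^ ((1:ℝ) - e) := by rw [h1]
        _ ≤ K * M * (n:ℝ) ^ e * 1 := by
            apply mul_le_mul_of_nonneg_left h2
            exact mul_nonneg (mul_nonneg hK0 hM0) (Real.rpow_nonneg hn0.le _)
        _ = K * M * (n:ℝ) ^ e := by ring
    have hQ2 : Q ^ (n-1) ≤ 2 * Q ^ n := by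
      have h1 : Q ^ (n-1) * Q = Q ^ n := by
        rw [← pow_succ]
        congr 1
        omega
      calc Q ^ (n-1) = 2 * (Q ^ (n-1) * (1/2)) := by ring
        _ ≤ 2 * (Q ^ (n-1) * Q) := by
            apply mul_le_mul_of_nonneg_left _ (by norm_num)
            exact mul_le_mul_of_nonneg_left hQhalf (pow_nonneg hQ0.le _)
        _ = 2 * Q ^ n := by rw [h1]
    calc ‖(B ^ n) i j‖ * (1 + d) ≤ ((n:ℝ) * (ε * Q ^ (n-1))) * (1 + d) := by
          apply mul_le_mul_of_nonneg_right hsum2 (by linarith)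
      _ = (n:ℝ) * (ε * (1 + d)) * Q ^ (n-1) := by ring
      _ ≤ (n:ℝ) * (K * M * (n:ℝ) ^ e) * (2 * Q ^ n) := by
          apply mul_le_mul
          · exact mul_le_mul_of_nonneg_left hεd hn0.le
          · exact hQ2
          · exact pow_nonneg hQ0.le _
          · apply mul_nonneg hn0.le
            exact mul_nonneg (mul_nonneg hK0 hM0) (Real.rpow_nonneg hn0.le _)
      _ = 2*K*M * ((n:ℝ) * (n:ℝ) ^ e) * Q ^ n := by ring
      _ = 2*K*M * (n:ℝ) ^ ((1:ℝ)+e) * Q ^ n := by rw [hpow1e]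
      _ ≤ (1 + 2*K*M + 2*K*M*y) * (n:ℝ) ^ ((1:ℝ)+e) * Q ^ n := by
          apply mul_le_mul_of_nonneg_right _ hQn0
          apply mul_le_mul_of_nonneg_right _ hnk0
          linarith
  · -- case 2 : distance is small compared to n
    push_neg at hcase
    have hde : ((1:ℝ) + d) ^ e ≤ (2*K*M*y) * (n:ℝ) ^ e := by
      have hX : (0:ℝ) < (1 + d) ^ e := Real.rpow_pos_of_pos (by linarith) _
      have h2 : (1 - b) / 2 * ((1 + d) ^ e) < K * M * (n:ℝ) ^ e := by
        have h3 := mul_lt_mul_of_pos_right hcase hX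
        calc (1 - b) / 2 * ((1 + d) ^ e) < ε * (1 + d) ^ e := h3
          _ = K * M * (n:ℝ) ^ e * ((1 + d) ^ (-e) * (1 + d) ^ e) := by rw [hεdef]; ring
          _ = K * M * (n:ℝ) ^ e := by
              rw [← Real.rpow_add (by linarith), neg_add_cancel, Real.rpow_zero, mul_one]
      calc (1 + d) ^ e = (y * (1 - b)) * ((1 + d) ^ e) := by rw [hyb, one_mul]
        _ = (2 * y) * ((1 - b) / 2 * ((1 + d) ^ e)) := by ring
        _ ≤ (2 * y) * (K * M * (n:ℝ) ^ e) := by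
            apply mul_le_mul_of_nonneg_left h2.le (by linarith)
        _ = (2*K*M*y) * (n:ℝ) ^ e := by ring
    have hda : 1 + d ≤ (1 + 2*K*M*y) * n := by
      have h0 : (0:ℝ) ≤ (1 + 2*K*M*y) * n := by positivity
      rw [← Real.rpow_le_rpow_iff (by linarith) h0 he0]
      have h1 : ((1 + 2*K*M*y) * (n:ℝ)) ^ e = (1 + 2*K*M*y) ^ e * (n:ℝ) ^ e :=
        Real.mul_rpow (by linarith) hn0.le
      have h2 : 2*K*M*y ≤ (1 + 2*K*M*y) ^ e := by
        calc 2*K*M*y ≤ 1 + 2*K*M*y := by linarith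
          _ = (1 + 2*K*M*y) ^ (1:ℝ) := (Real.rpow_one _).symm
          _ ≤ (1 + 2*K*M*y) ^ e := Real.rpow_le_rpow_of_exponent_le (by linarith) (by linarith)
      rw [h1]
      calc (1 + d) ^ e ≤ (2*K*M*y) * (n:ℝ) ^ e := hde
        _ ≤ (1 + 2*K*M*y) ^ e * (n:ℝ) ^ e :=
            mul_le_mul_of_nonneg_right h2 (Real.rpow_nonneg hn0.le _)
    calc ‖(B ^ n) i j‖ * (1 + d) ≤ b ^ n * ((1 + 2*K*M*y) * n) := by
          apply mul_le_mul hentry_b hda (by linarith) (pow_nonneg hb0 n)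
      _ = (1 + 2*K*M*y) * (n:ℝ) * b ^ n := by ring
      _ ≤ (1 + 2*K*M + 2*K*M*y) * (n:ℝ) ^ ((1:ℝ)+e) * Q ^ n := by
          apply mul_le_mul _ hbQn (pow_nonneg hb0 n) _
          · apply mul_le_mul _ hnkn hn0.le _
            · linarith
            · linarith
          · apply mul_nonneg _ hnk0
            linarith
end
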